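/- Let p, q ≥ 2 be integers. The map ℤ[1/pq] ⋊_α ℤ² → (ℤ[1/pq] ⋊_η ℤ) ⋊_γ ℤ given by (x, m, n) ↦ ((x, n), m − n) is a group isomorphism, where α is the ℤ²-action by (m,n)·x = p^m q^n x, η is the ℤ-action by multiplication by pq, and γ is the ℤ-action on ℤ[1/pq] ⋊_η ℤ given by γ_k(x, z) = (p^k x, z). -/

import Mathlib

/-- The additive group `ℤ[1/N] = {x ∈ ℚ : x·N^k ∈ ℤ for some k}`. -/
def Zr (N : ℕ) : AddSubgroup ℚ where
  carrier := {x : ℚ | ∃ a : ℤ, ∃ k : ℕ, x * (N : ℚ) ^ k = (a : ℚ)}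
  zero_mem' := ⟨0, 0, by norm_num⟩
  add_mem' := by
    rintro x y ⟨a, k, ha⟩ ⟨b, l, hb⟩
    exact ⟨a * (N : ℤ) ^ l + b * (N : ℤ) ^ k, k + l, by
      push_cast
      rw [pow_add]
      linear_combination ((N : ℚ) ^ l) * ha + ((N : ℚ) ^ k) * hb⟩
  neg_mem' := by
    rintro x ⟨a, k, ha⟩
    exact ⟨-a, k, by push_cast; linear_combination -ha⟩

theorem one_mem_Zr (N : ℕ) : (1 : ℚ) ∈ Zr N := ⟨1, 0, by norm_num⟩

theorem mem_Zr_smul (p q : ℕ) (hp : 2 ≤ p) (hq : 2 ≤ q) (m n : ℤ) {x : ℚ}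
    (hx : x ∈ Zr (p * q)) : (p : ℚ) ^ m * (q : ℚ) ^ n * x ∈ Zr (p * q) := by
  have hp0 : (p : ℚ) ≠ 0 := Nat.cast_ne_zero.mpr (by omega)
  have hq0 : (q : ℚ) ≠ 0 := Nat.cast_ne_zero.mpr (by omega)
  obtain ⟨a, k, ha⟩ := hx
  set j : ℕ := m.natAbs + n.natAbs with hj
  have hm : ((m + j).toNat : ℤ) = m + j := by omega
  have hn : ((n + j).toNat : ℤ) = n + j := by omega
  refine ⟨(p : ℤ) ^ (m + j).toNat * (q : ℤ) ^ (n + j).toNat * a, k + j, ?_⟩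
  have e1 : ((p : ℚ)) ^ ((m + (j : ℤ)).toNat) = (p : ℚ) ^ (m + (j : ℤ)) := by
    rw [← zpow_natCast, hm]
  have e2 : ((q : ℚ)) ^ ((n + (j : ℤ)).toNat) = (q : ℚ) ^ (n + (j : ℤ)) := by
    rw [← zpow_natCast, hn]
  push_cast
  rw [e1, e2, zpow_add₀ hp0, zpow_add₀ hq0, zpow_natCast, zpow_natCast, pow_add]
  push_cast at ha ⊢
  linear_combination ((p : ℚ) ^ m * (q : ℚ) ^ n * ((p : ℚ) * (q : ℚ)) ^ j) * ha

/-- Multiplication by `p^m q^n` as an automorphism of `ℤ[1/pq]`. -/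
noncomputable def scaleEquiv (p q : ℕ) (hp : 2 ≤ p) (hq : 2 ≤ q) (m n : ℤ) :
    Zr (p * q) ≃+ Zr (p * q) where
  toFun x := ⟨(p : ℚ) ^ m * (q : ℚ) ^ n * x, mem_Zr_smul p q hp hq m n x.2⟩
  invFun x := ⟨(p : ℚ) ^ (-m) * (q : ℚ) ^ (-n) * x,
    mem_Zr_smul p q hp hq (-m) (-n) x.2⟩
  left_inv x := by
    have hp0 : (p : ℚ) ≠ 0 := Nat.cast_ne_zero.mpr (by omega)
    have hq0 : (q : ℚ) ≠ 0 := Nat.cast_ne_zero.mpr (by omega)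
    ext
    show (p : ℚ) ^ (-m) * (q : ℚ) ^ (-n) * ((p : ℚ) ^ m * (q : ℚ) ^ n * x) = x
    rw [zpow_neg, zpow_neg]
    field_simp
  right_inv x := by
    have hp0 : (p : ℚ) ≠ 0 := Nat.cast_ne_zero.mpr (by omega)
    have hq0 : (q : ℚ) ≠ 0 := Nat.cast_ne_zero.mpr (by omega)
    ext
    show (p : ℚ) ^ m * (q : ℚ) ^ n * ((p : ℚ) ^ (-m) * (q : ℚ) ^ (-n) * x) = x
    rw [zpow_neg, zpow_neg]
    field_simp
  map_add' x y := by
    ext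
    show (p : ℚ) ^ m * (q : ℚ) ^ n * ((x : ℚ) + y) = _
    push_cast
    ring

/-- The action of `ℤ²` on `ℤ[1/pq]` by multiplication by `p^m q^n`, as a
homomorphism into the automorphism group. -/
noncomputable def scaleHom (p q : ℕ) (hp : 2 ≤ p) (hq : 2 ≤ q) :
    Multiplicative (ℤ × ℤ) →*
      MulAut (Multiplicative (Zr (p * q))) :=
  MonoidHom.mk'
    (fun g => AddEquiv.toMultiplicative
      (scaleEquiv p q hp hq g.toAdd.1 g.toAdd.2))
    (by
      have hp0 : (p : ℚ) ≠ 0 := Nat.cast_ne_zero.mpr (by omega)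
      have hq0 : (q : ℚ) ≠ 0 := Nat.cast_ne_zero.mpr (by omega)
      intro a b
      ext x
      show ((p:ℚ) ^ (a.toAdd.1 + b.toAdd.1) * (q:ℚ) ^ (a.toAdd.2 + b.toAdd.2)
        * ((x.toAdd : ℚ)) : ℚ) = (p:ℚ) ^ a.toAdd.1 * (q:ℚ) ^ a.toAdd.2 *
          ((p:ℚ) ^ b.toAdd.1 * (q:ℚ) ^ b.toAdd.2 * (x.toAdd : ℚ))
      rw [zpow_add₀ hp0, zpow_add₀ hq0]
      ring)

/-- The action of `ℤ` on `ℤ[1/pq]` by multiplication by `(pq)^z`. -/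
noncomputable def etaHom (p q : ℕ) (hp : 2 ≤ p) (hq : 2 ≤ q) :
    Multiplicative ℤ →* MulAut (Multiplicative (Zr (p * q))) :=
  (scaleHom p q hp hq).comp
    (MonoidHom.mk' (fun z => Multiplicative.ofAdd (z.toAdd, z.toAdd))
      (fun _ _ => rfl))

open SemidirectProduct Multiplicative

lemma mEq {N : ℕ} {a b : Multiplicative (Zr N)}
    (h : ((toAdd a : Zr N) : ℚ) = ((toAdd b : Zr N) : ℚ)) : a = b :=
  Multiplicative.toAdd.injective (Subtype.ext h)

lemma scaleHom_coe (p q : ℕ) (hp : 2 ≤ p) (hq : 2 ≤ q)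
    (g : Multiplicative (ℤ × ℤ)) (x : Multiplicative (Zr (p * q))) :
    ((toAdd (scaleHom p q hp hq g x) : Zr (p * q)) : ℚ)
      = (p : ℚ) ^ (toAdd g).1 * (q : ℚ) ^ (toAdd g).2
        * ((toAdd x : Zr (p * q)) : ℚ) := rfl

lemma etaHom_coe (p q : ℕ) (hp : 2 ≤ p) (hq : 2 ≤ q)
    (z : Multiplicative ℤ) (x : Multiplicative (Zr (p * q))) :
    ((toAdd (etaHom p q hp hq z x) : Zr (p * q)) : ℚ)
      = (p : ℚ) ^ (toAdd z) * (q : ℚ) ^ (toAdd z)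
        * ((toAdd x : Zr (p * q)) : ℚ) := rfl

lemma coe_toAdd_mul {N : ℕ} (a b : Multiplicative (Zr N)) :
    ((toAdd (a * b) : Zr N) : ℚ)
      = ((toAdd a : Zr N) : ℚ) + ((toAdd b : Zr N) : ℚ) := rfl

/-- The automorphism `γ_k(x, z) = (p^k x, z)` of `ℤ[1/pq] ⋊_η ℤ`. -/
noncomputable def gammaEquiv (p q : ℕ) (hp : 2 ≤ p) (hq : 2 ≤ q) (k : ℤ) :
    (Multiplicative (Zr (p * q)) ⋊[etaHom p q hp hq] Multiplicative ℤ) ≃*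
    (Multiplicative (Zr (p * q)) ⋊[etaHom p q hp hq] Multiplicative ℤ) where
  toFun g := ⟨scaleHom p q hp hq (ofAdd (k, 0)) g.left, g.right⟩
  invFun g := ⟨scaleHom p q hp hq (ofAdd (-k, 0)) g.left, g.right⟩
  left_inv g := by
    have hp0 : (p : ℚ) ≠ 0 := Nat.cast_ne_zero.mpr (by omega)
    ext
    · simp only [scaleHom_coe, toAdd_ofAdd, zpow_zero, one_mul]
      have := zpow_ne_zero k hp0
      rw [mul_one, mul_one, ← mul_assoc, ← zpow_add₀ hp0]
      simp
    · rfl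
  right_inv g := by
    have hp0 : (p : ℚ) ≠ 0 := Nat.cast_ne_zero.mpr (by omega)
    ext
    · simp only [scaleHom_coe, toAdd_ofAdd, zpow_zero, one_mul]
      have := zpow_ne_zero k hp0
      rw [mul_one, mul_one, ← mul_assoc, ← zpow_add₀ hp0]
      simp
    · rfl
  map_mul' a b := by
    ext
    · simp only [SemidirectProduct.mul_left, SemidirectProduct.mul_right,
        scaleHom_coe, etaHom_coe, coe_toAdd_mul]
      ring
    · rfl

/-- The `ℤ`-action `γ` on `ℤ[1/pq] ⋊_η ℤ`. -/
noncomputable def gammaHom (p q : ℕ) (hp : 2 ≤ p) (hq : 2 ≤ q) :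
    Multiplicative ℤ →*
      MulAut (Multiplicative (Zr (p * q)) ⋊[etaHom p q hp hq]
        Multiplicative ℤ) :=
  MonoidHom.mk' (fun k => gammaEquiv p q hp hq (toAdd k)) (by
    have hp0 : (p : ℚ) ≠ 0 := Nat.cast_ne_zero.mpr (by omega)
    intro k l
    ext g
    · simp only [gammaEquiv, MulAut.mul_apply, MulEquiv.coe_mk,
        Equiv.coe_fn_mk, scaleHom_coe, toAdd_ofAdd, toAdd_mul, zpow_zero,
        one_mul, mul_one]
      rw [zpow_add₀ hp0, mul_assoc]
    · rfl)

/-- `ℤ[1/pq] ⋊ ℤ²` is isomorphic, via `(x, m, n) ↦ ((x, n), m - n)`, to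
`(ℤ[1/pq] ⋊_η ℤ) ⋊_γ ℤ`, where `η` is multiplication by `pq` and `γ` is the
`ℤ`-action `γ_k(x, z) = (p^k x, z)`. -/
theorem stmt_17 (p q : ℕ) (hp : 2 ≤ p) (hq : 2 ≤ q) :
    ∃ γ : Multiplicative ℤ →*
        MulAut (Multiplicative (Zr (p * q)) ⋊[etaHom p q hp hq]
          Multiplicative ℤ),
      (∀ (k : ℤ) (b : Multiplicative (Zr (p * q)) ⋊[etaHom p q hp hq]
          Multiplicative ℤ),
        ((toAdd ((γ (ofAdd k)) b).left : Zr (p * q)) : ℚ)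
            = (p : ℚ) ^ k * ((toAdd b.left : Zr (p * q)) : ℚ) ∧
          ((γ (ofAdd k)) b).right = b.right) ∧
      ∃ iso : (Multiplicative (Zr (p * q)) ⋊[scaleHom p q hp hq]
            Multiplicative (ℤ × ℤ)) ≃*
          ((Multiplicative (Zr (p * q)) ⋊[etaHom p q hp hq]
            Multiplicative ℤ) ⋊[γ] Multiplicative ℤ),
        ∀ (x : Zr (p * q)) (m n : ℤ),
          iso ⟨ofAdd x, ofAdd (m, n)⟩ = ⟨⟨ofAdd x, ofAdd n⟩, ofAdd (m - n)⟩ := by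
  have hp0 : (p : ℚ) ≠ 0 := Nat.cast_ne_zero.mpr (by omega)
  have hq0 : (q : ℚ) ≠ 0 := Nat.cast_ne_zero.mpr (by omega)
  refine ⟨gammaHom p q hp hq,
    fun k b => ⟨by simp [gammaHom, gammaEquiv, scaleHom_coe], rfl⟩, ?_⟩
  refine ⟨{
    toFun := fun g => ⟨⟨g.left, ofAdd (toAdd g.right).2⟩,
      ofAdd ((toAdd g.right).1 - (toAdd g.right).2)⟩
    invFun := fun h => ⟨h.left.left,
      ofAdd (toAdd h.right + toAdd h.left.right, toAdd h.left.right)⟩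
    left_inv := fun g => by
      ext
      · rfl
      · simp
      · simp
    right_inv := fun h => by
      ext
      · rfl
      · rfl
      · simp
    map_mul' := fun a b => by
      ext
      · simp only [SemidirectProduct.mul_left, SemidirectProduct.mul_right,
          gammaHom, gammaEquiv, MonoidHom.mk', MonoidHom.coe_mk,
          OneHom.coe_mk, MulEquiv.coe_mk,
          Equiv.coe_fn_mk, MulAut.mul_apply, toAdd_ofAdd,
          scaleHom_coe, etaHom_coe, coe_toAdd_mul]
        show _ = ((toAdd a.left : Zr (p * q)) : ℚ) + (p : ℚ) ^ (toAdd a.right).2 * (q : ℚ) ^ (toAdd a.right).2 *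
          ((p : ℚ) ^ ((toAdd a.right).1 - (toAdd a.right).2) * (q : ℚ) ^ (0 : ℤ) * ((toAdd b.left : Zr (p * q)) : ℚ))
        rw [zpow_sub₀ hp0]
        field_simp
      · rfl
      · simp only [SemidirectProduct.mul_right, toAdd_mul, toAdd_ofAdd, Prod.fst_add,
          Prod.snd_add]
        ring }, fun x m n => rfl⟩
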